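/- Let F₇ = (x₀²x₁ + x₁²x₂ + x₂²x₀ − 3x₀x₁x₂)² − 4x₀x₁x₂(x₀−x₁)(x₁−x₂)(x₂−x₀) ∈ ℂ[x₀,x₁,x₂], a homogeneous sextic. The set of singular points of the plane curve {F₇ = 0} ⊂ ℙ²(ℂ) is exactly the four points (1:1:1), (1:0:0), (0:1:0) and (0:0:1). -/
import Mathlib

open MvPolynomial

/-- Naruki's homogeneous sextic
`F₇ = (x₀²x₁ + x₁²x₂ + x₂²x₀ − 3x₀x₁x₂)² − 4x₀x₁x₂(x₀−x₁)(x₁−x₂)(x₂−x₀)`,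
the branching locus of the singular K3 surface of discriminant 7. -/
noncomputable def F7 : MvPolynomial (Fin 3) ℂ :=
  (X 0 ^ 2 * X 1 + X 1 ^ 2 * X 2 + X 2 ^ 2 * X 0 - 3 * (X 0 * X 1 * X 2)) ^ 2 -
    4 * (X 0 * X 1 * X 2 * (X 0 - X 1) * (X 1 - X 2) * (X 2 - X 0))

lemma pderiv_three (i : Fin 3) : (pderiv i) (3 : MvPolynomial (Fin 3) ℂ) = 0 := by
  have : (3 : MvPolynomial (Fin 3) ℂ) = C 3 := map_ofNat C 3
  rw [this, pderiv_C]

lemma pderiv_four (i : Fin 3) : (pderiv i) (4 : MvPolynomial (Fin 3) ℂ) = 0 := by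
  have : (4 : MvPolynomial (Fin 3) ℂ) = C 4 := map_ofNat C 4
  rw [this, pderiv_C]

lemma evalD0 (v : Fin 3 → ℂ) : eval v (pderiv 0 F7) =
    4*(v 0)^3*(v 1)^2 + (-6:ℂ)*(v 0)^2*(v 1)^2*(v 2) + (-6:ℂ)*(v 0)^2*(v 1)*(v 2)^2 +
    (-4:ℂ)*(v 0)*(v 1)^3*(v 2) + 18*(v 0)*(v 1)^2*(v 2)^2 + (-4:ℂ)*(v 0)*(v 1)*(v 2)^3 +
    2*(v 0)*(v 2)^4 + (-2:ℂ)*(v 1)^3*(v 2)^2 + (-2:ℂ)*(v 1)^2*(v 2)^3 := by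
  simp [F7, pderiv_mul, pderiv_pow, pderiv_three, pderiv_four]
  ring

lemma evalD1 (v : Fin 3 → ℂ) : eval v (pderiv 1 F7) =
    2*(v 0)^4*(v 1) + (-4:ℂ)*(v 0)^3*(v 1)*(v 2) + (-2:ℂ)*(v 0)^3*(v 2)^2 +
    (-6:ℂ)*(v 0)^2*(v 1)^2*(v 2) + 18*(v 0)^2*(v 1)*(v 2)^2 + (-2:ℂ)*(v 0)^2*(v 2)^3 +
    (-6:ℂ)*(v 0)*(v 1)^2*(v 2)^2 + (-4:ℂ)*(v 0)*(v 1)*(v 2)^3 + 4*(v 1)^3*(v 2)^2 := by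
  simp [F7, pderiv_mul, pderiv_pow, pderiv_three, pderiv_four]
  ring

lemma evalD2 (v : Fin 3 → ℂ) : eval v (pderiv 2 F7) =
    (-2:ℂ)*(v 0)^3*(v 1)^2 + (-4:ℂ)*(v 0)^3*(v 1)*(v 2) + (-2:ℂ)*(v 0)^2*(v 1)^3 +
    18*(v 0)^2*(v 1)^2*(v 2) + (-6:ℂ)*(v 0)^2*(v 1)*(v 2)^2 + 4*(v 0)^2*(v 2)^3 +
    (-4:ℂ)*(v 0)*(v 1)^3*(v 2) + (-6:ℂ)*(v 0)*(v 1)^2*(v 2)^2 + 2*(v 1)^4*(v 2) := by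
  simp [F7, pderiv_mul, pderiv_pow, pderiv_three, pderiv_four]
  ring

/-- The set of singular points of the plane sextic `{F₇ = 0} ⊂ ℙ²(ℂ)` is exactly the four
points `(1:1:1)`, `(1:0:0)`, `(0:1:0)` and `(0:0:1)`. -/
theorem singular_points_of_C7 (v : Fin 3 → ℂ) (hv : v ≠ 0) :
    (∀ i : Fin 3, MvPolynomial.eval v (MvPolynomial.pderiv i F7) = 0) ↔
      ∃ c : ℂ, c ≠ 0 ∧
        (v = c • ![1, 1, 1] ∨ v = c • ![1, 0, 0] ∨ v = c • ![0, 1, 0] ∨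
          v = c • ![0, 0, 1]) := by
  set A := v 0 with hA
  set B := v 1 with hB
  set C := v 2 with hC
  constructor
  · intro h
    have h0 : 4*A^3*B^2 + (-6:ℂ)*A^2*B^2*C + (-6:ℂ)*A^2*B*C^2 + (-4:ℂ)*A*B^3*C +
        18*A*B^2*C^2 + (-4:ℂ)*A*B*C^3 + 2*A*C^4 + (-2:ℂ)*B^3*C^2 + (-2:ℂ)*B^2*C^3 = 0 := by
      rw [← evalD0 v]; exact h 0
    have h1 : 2*A^4*B + (-4:ℂ)*A^3*B*C + (-2:ℂ)*A^3*C^2 + (-6:ℂ)*A^2*B^2*C +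
        18*A^2*B*C^2 + (-2:ℂ)*A^2*C^3 + (-6:ℂ)*A*B^2*C^2 + (-4:ℂ)*A*B*C^3 + 4*B^3*C^2 = 0 := by
      rw [← evalD1 v]; exact h 1
    have h2 : (-2:ℂ)*A^3*B^2 + (-4:ℂ)*A^3*B*C + (-2:ℂ)*A^2*B^3 + 18*A^2*B^2*C +
        (-6:ℂ)*A^2*B*C^2 + 4*A^2*C^3 + (-4:ℂ)*A*B^3*C + (-6:ℂ)*A*B^2*C^2 + 2*B^4*C = 0 := by
      rw [← evalD2 v]; exact h 2
    have hba : B * (A - C) = 0 := by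
      have h4 : (B * (A - C))^4 = 0 := by
        linear_combination
          ((-9/28:ℂ)*A^3 + (47/105:ℂ)*A^2*B + (-17/42:ℂ)*A^2*C + (1/5:ℂ)*A*B^2 +
            (29/28:ℂ)*A*B*C + (53/140:ℂ)*A*C^2 + (-1/20:ℂ)*B^3 + (-37/70:ℂ)*B^2*C +
            (-1/10:ℂ)*B*C^2) * h0 +
          ((9/14:ℂ)*A^2*B + (-94/105:ℂ)*A*B^2 + (251/210:ℂ)*A*B*C + (-27/140:ℂ)*A*C^2 +
            (-3/35:ℂ)*B^2*C + (3/70:ℂ)*B*C^2 + (-1/20:ℂ)*C^3) * h1 +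
          ((9/140:ℂ)*A^2*C + (-1/10:ℂ)*A*B^2 + (77/60:ℂ)*A*B*C + (17/210:ℂ)*A*C^2 +
            (-1/20:ℂ)*B^2*C + (-57/140:ℂ)*B*C^2 + (-3/14:ℂ)*C^3) * h2
      exact pow_eq_zero_iff (by norm_num) |>.mp h4
    have hcb : C * (B - A) = 0 := by
      have h4 : (C * (B - A))^4 = 0 := by
        linear_combination
          ((3/28:ℂ)*A^3 + (-32/105:ℂ)*A^2*B + (39/70:ℂ)*A^2*C + (-271/420:ℂ)*A*B*C +
            (-97/140:ℂ)*A*C^2 + (27/140:ℂ)*B^2*C + (-1/10:ℂ)*B*C^2) * h0 +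
          ((-37/140:ℂ)*A^2*B + (-1/10:ℂ)*A^2*C + (47/84:ℂ)*A*B^2 + (-25/28:ℂ)*A*B*C +
            (-47/140:ℂ)*A*C^2 + (13/210:ℂ)*B^2*C + (19/140:ℂ)*B*C^2 + (-1/20:ℂ)*C^3) * h1 +
          ((-1/20:ℂ)*A^3 + (-3/140:ℂ)*A^2*C + (-11/15:ℂ)*A*B*C + (-33/70:ℂ)*A*C^2 +
            (29/420:ℂ)*B*C^2 + (9/28:ℂ)*C^3) * h2
      exact pow_eq_zero_iff (by norm_num) |>.mp h4
    rcases mul_eq_zero.mp hba with hB0 | hAC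
    · rcases mul_eq_zero.mp hcb with hC0 | hBA
      · -- B = 0, C = 0 : point (1:0:0)
        refine ⟨A, ?_, Or.inr (Or.inl ?_)⟩
        · intro hA0
          apply hv; funext i; fin_cases i
          · exact hA0
          · exact hB0
          · exact hC0
        · funext i; fin_cases i <;>
            simp [← hA, ← hB, ← hC, hB0, hC0]
      · -- B = 0, B = A : A = 0, point (0:0:1)
        have hA0 : A = 0 := by rw [← sub_eq_zero.mp hBA]; exact hB0
        refine ⟨C, ?_, Or.inr (Or.inr (Or.inr ?_))⟩
        · intro hC0
          apply hv; funext i; fin_cases i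
          · exact hA0
          · exact hB0
          · exact hC0
        · funext i; fin_cases i <;>
            simp [← hA, ← hB, ← hC, hB0, hA0]
    · have hAC' : A = C := sub_eq_zero.mp hAC
      rcases mul_eq_zero.mp hcb with hC0 | hBA
      · -- A = C = 0 : point (0:1:0)
        have hA0 : A = 0 := by rw [hAC', hC0]
        refine ⟨B, ?_, Or.inr (Or.inr (Or.inl ?_))⟩
        · intro hB0
          apply hv; funext i; fin_cases i
          · exact hA0
          · exact hB0
          · exact hC0
        · funext i; fin_cases i <;>
            simp [← hA, ← hB, ← hC, hA0, hC0]
      · -- A = B = C : point (1:1:1)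
        have hBA' : B = A := sub_eq_zero.mp hBA
        refine ⟨A, ?_, Or.inl ?_⟩
        · intro hA0
          have hB0 : B = 0 := by rw [hBA', hA0]
          have hC0 : C = 0 := by rw [← hAC', hA0]
          apply hv; funext i; fin_cases i
          · exact hA0
          · exact hB0
          · exact hC0
        · funext i; fin_cases i <;>
            simp [← hA, ← hB, ← hC, hBA', ← hAC']
  · rintro ⟨c, hc, h | h | h | h⟩ <;> intro i <;>
    · have e0 : A = v 0 := hA
      have e1 : B = v 1 := hB
      have e2 : C = v 2 := hC
      rw [h] at e0 e1 e2
      simp at e0 e1 e2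
      fin_cases i
      · exact (evalD0 v).trans (by rw [← hA, ← hB, ← hC, e0, e1, e2]; ring)
      · exact (evalD1 v).trans (by rw [← hA, ← hB, ← hC, e0, e1, e2]; ring)
      · exact (evalD2 v).trans (by rw [← hA, ← hB, ← hC, e0, e1, e2]; ring)
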